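/- For every x in a real Banach space X, the function y ↦ ‖x‖y‖ + y‖ + ‖x‖y‖ − y‖ satisfies the triangle inequality: for all y₁, y₂ ∈ X, ‖y₁ + y₂‖ₓ ≤ ‖y₁‖ₓ + ‖y₂‖ₓ. -/

import Mathlib

private lemma aux_mono {X : Type*} [NormedAddCommGroup X] [NormedSpace ℝ X]
    (x y : X) {s t : ℝ} (hs : 0 ≤ s) (hst : s ≤ t) :
    ‖s • x + y‖ + ‖s • x - y‖ ≤ ‖t • x + y‖ + ‖t • x - y‖ := by
  rcases eq_or_lt_of_le (hs.trans hst) with ht | ht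
  · obtain rfl : s = t := le_antisymm hst (by linarith [hs, ht.symm.le])
    exact le_rfl
  · set μ : ℝ := (t + s) / (2 * t) with hμ
    set ν : ℝ := (t - s) / (2 * t) with hν
    have hμ0 : 0 ≤ μ := by positivity
    have hν0 : 0 ≤ ν := by
      apply div_nonneg <;> linarith
    have hsum : μ + ν = 1 := by
      rw [hμ, hν, ← add_div, div_eq_one_iff_eq (ne_of_gt (by linarith))]; ring
    have hdiff : μ * t - ν * t = s := by
      rw [hμ, hν, div_mul_eq_mul_div, div_mul_eq_mul_div, div_sub_div_same,
        div_eq_iff (ne_of_gt (by linarith))]; ring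
    clear_value μ ν
    have h1 : s • x + y = μ • (t • x + y) - ν • (t • x - y) := by
      have e : μ • (t • x + y) - ν • (t • x - y)
          = (μ * t - ν * t) • x + (μ + ν) • y := by module
      rw [e, hdiff, hsum, one_smul]
    have h2 : s • x - y = μ • (t • x - y) - ν • (t • x + y) := by
      have e : μ • (t • x - y) - ν • (t • x + y)
          = (μ * t - ν * t) • x - (μ + ν) • y := by module
      rw [e, hdiff, hsum, one_smul]
    calc ‖s • x + y‖ + ‖s • x - y‖
        ≤ (μ * ‖t • x + y‖ + ν * ‖t • x - y‖) +
          (μ * ‖t • x - y‖ + ν * ‖t • x + y‖) := by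
          gcongr ?_ + ?_
          · rw [h1]
            calc ‖μ • (t • x + y) - ν • (t • x - y)‖
                ≤ ‖μ • (t • x + y)‖ + ‖ν • (t • x - y)‖ := norm_sub_le _ _
              _ = μ * ‖t • x + y‖ + ν * ‖t • x - y‖ := by
                  rw [norm_smul, norm_smul, Real.norm_of_nonneg hμ0,
                    Real.norm_of_nonneg hν0]
          · rw [h2]
            calc ‖μ • (t • x - y) - ν • (t • x + y)‖
                ≤ ‖μ • (t • x - y)‖ + ‖ν • (t • x + y)‖ := norm_sub_le _ _
              _ = μ * ‖t • x - y‖ + ν * ‖t • x + y‖ := by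
                  rw [norm_smul, norm_smul, Real.norm_of_nonneg hμ0,
                    Real.norm_of_nonneg hν0]
      _ = (μ + ν) * (‖t • x + y‖ + ‖t • x - y‖) := by ring
      _ = ‖t • x + y‖ + ‖t • x - y‖ := by rw [hsum, one_mul]

theorem stmt_1 {X : Type*} [NormedAddCommGroup X] [NormedSpace ℝ X] [CompleteSpace X]
    (x : X) (y₁ y₂ : X) :
    ‖(‖y₁ + y₂‖ : ℝ) • x + (y₁ + y₂)‖ + ‖(‖y₁ + y₂‖ : ℝ) • x - (y₁ + y₂)‖ ≤
      (‖(‖y₁‖ : ℝ) • x + y₁‖ + ‖(‖y₁‖ : ℝ) • x - y₁‖) +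
      (‖(‖y₂‖ : ℝ) • x + y₂‖ + ‖(‖y₂‖ : ℝ) • x - y₂‖) := by
  have h1 := aux_mono x (y₁ + y₂) (norm_nonneg (y₁ + y₂)) (norm_add_le y₁ y₂)
  refine h1.trans ?_
  have e1 : (‖y₁‖ + ‖y₂‖) • x + (y₁ + y₂) = (‖y₁‖ • x + y₁) + (‖y₂‖ • x + y₂) := by
    rw [add_smul]; abel
  have e2 : (‖y₁‖ + ‖y₂‖) • x - (y₁ + y₂) = (‖y₁‖ • x - y₁) + (‖y₂‖ • x - y₂) := by
    rw [add_smul]; abel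
  rw [e1, e2]
  have := norm_add_le (‖y₁‖ • x + y₁) (‖y₂‖ • x + y₂)
  have := norm_add_le (‖y₁‖ • x - y₁) (‖y₂‖ • x - y₂)
  linarith
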